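/- For any α>0 and any r∈(0,1), the polylogarithm Li_{−α}(r) := Σ_{k≥1} k^α r^k satisfies Li_{−α}(r) ≤ 2·(α/(e·log(1/r)))^α + Γ(α+1)/(log(1/r))^{α+1}, where Γ is the Gamma function. -/

import Mathlib

open MeasureTheory Filter Real Set
open scoped ENNReal NNReal Classical

noncomputable section

/-- Shift operator on Borel measures: `(shiftMeasure a μ) B = μ (B - a)`. -/
def shiftMeasure (a : ℝ) (μ : Measure ℝ) : Measure ℝ := μ.map (· + a)

/-- Kullback–Leibler divergence between Borel measures on `ℝ`. -/
def KLdiv (μ ν : Measure ℝ) : ℝ≥0∞ :=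
  if μ ≪ ν ∧ Integrable (llr μ ν) μ then ENNReal.ofReal (∫ x, llr μ ν x ∂μ) else ⊤

/-- Standing assumptions on the cost function. -/
structure IsCostFun (c : ℝ → ℝ) (α β : ℝ) : Prop where
  nonneg : ∀ x, 0 ≤ c x
  zero : c 0 = 0
  even : ∀ x, c (-x) = c x
  mono : ∀ x y : ℝ, |x| ≤ |y| → c x ≤ c y
  continuous : Continuous c
  tail : Tendsto (fun x : ℝ => c x / (β * x ^ α)) atTop (nhds 1)


/-- Polylogarithm bound: `Li_{-α}(r) = Σ_{k≥1} k^α r^k ≤ 2(α/(e log(1/r)))^α + Γ(α+1)/(log(1/r))^{α+1}`. -/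
theorem polylog_bound (α r : ℝ) (hα : 0 < α) (hr : r ∈ Set.Ioo (0 : ℝ) 1) :
    (∑' k : ℕ, (k : ℝ) ^ α * r ^ k) ≤
      2 * (α / (Real.exp 1 * Real.log (1 / r))) ^ α +
        Real.Gamma (α + 1) / Real.log (1 / r) ^ (α + 1) := by
  obtain ⟨hr0, hr1⟩ := hr
  set L : ℝ := Real.log (1 / r) with hLdef
  have hL0 : 0 < L := Real.log_pos (one_lt_one_div hr0 hr1)
  set f : ℝ → ℝ := fun x => x ^ α * Real.exp (-(L * x)) with hfdef
  have hf0 : ∀ x : ℝ, 0 ≤ x → 0 ≤ f x := fun x hx =>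
    mul_nonneg (Real.rpow_nonneg hx α) (Real.exp_pos _).le
  have hcont : Continuous f := by
    apply Continuous.mul
    · exact continuous_id.rpow_const fun x => Or.inr hα.le
    · exact Real.continuous_exp.comp (by continuity)
  -- the function value in exponential form, for positive x
  have hfexp : ∀ x : ℝ, 0 < x → f x = Real.exp (Real.log x * α - L * x) := by
    intro x hx
    rw [hfdef]
    simp only
    rw [Real.rpow_def_of_pos hx, ← Real.exp_add, sub_eq_add_neg]
  -- maximum bound
  set M : ℝ := (α / (Real.exp 1 * L)) ^ α with hMdef
  have hM0 : 0 ≤ M := Real.rpow_nonneg (by positivity) α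
  have hM : ∀ x : ℝ, 0 ≤ x → f x ≤ M := by
    intro x hx
    rcases eq_or_lt_of_le hx with h | hx
    · have : f 0 = 0 := by
        rw [hfdef]; simp [Real.zero_rpow hα.ne']
      rw [← h, this]; exact hM0
    · have hbase : (0:ℝ) < α / (Real.exp 1 * L) := by positivity
      rw [hfexp x hx, hMdef, Real.rpow_def_of_pos hbase]
      apply Real.exp_le_exp.mpr
      have h2 : Real.log (α / (Real.exp 1 * L)) = Real.log α - 1 - Real.log L := by
        rw [Real.log_div hα.ne' (by positivity), Real.log_mul (Real.exp_ne_zero 1) hL0.ne',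
          Real.log_exp]; ring
      have key : Real.log (x * L / α) ≤ x * L / α - 1 :=
        Real.log_le_sub_one_of_pos (by positivity)
      have h1 : Real.log (x * L / α) = Real.log x + Real.log L - Real.log α := by
        rw [Real.log_div (by positivity) hα.ne', Real.log_mul hx.ne' hL0.ne']
      rw [h1] at key
      have h3 : α * (x * L / α) = x * L := by field_simp
      have key2 : α * (Real.log x + Real.log L - Real.log α) ≤ x * L - α := by
        nlinarith [mul_le_mul_of_nonneg_left key hα.le]
      rw [h2]
      nlinarith [key2]
  -- increasing on [0, α/L]
  have hincr : ∀ a b : ℝ, 0 ≤ a → a ≤ b → b ≤ α / L → f a ≤ f b := by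
    intro a b ha hab hbL
    rcases eq_or_lt_of_le ha with h | ha
    · have : f 0 = 0 := by rw [hfdef]; simp [Real.zero_rpow hα.ne']
      rw [← h, this]
      exact hf0 b (ha.trans hab)
    · have hb : 0 < b := lt_of_lt_of_le ha hab
      rw [hfexp a ha, hfexp b hb]
      apply Real.exp_le_exp.mpr
      have hLb : L * b ≤ α := by
        rw [mul_comm]; exact (le_div_iff₀ hL0).mp hbL
      have k1 : Real.log a - Real.log b ≤ a / b - 1 := by
        have := Real.log_le_sub_one_of_pos (div_pos ha hb)
        rwa [Real.log_div ha.ne' hb.ne'] at this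
      have hba : b * (a / b) = a := by field_simp
      have k1' : b * Real.log a - b * Real.log b ≤ a - b := by
        nlinarith [mul_le_mul_of_nonneg_left k1 hb.le]
      have hD : b - a ≤ b * (Real.log b - Real.log a) := by nlinarith [k1']
      have hD0 : 0 ≤ Real.log b - Real.log a := by nlinarith [hD, hb, sub_nonneg.mpr hab]
      have c1 : L * (b - a) ≤ L * (b * (Real.log b - Real.log a)) :=
        mul_le_mul_of_nonneg_left hD hL0.le
      have c2 : L * b * (Real.log b - Real.log a) ≤ α * (Real.log b - Real.log a) :=
        mul_le_mul_of_nonneg_right hLb hD0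
      nlinarith [c1, c2]
  -- decreasing on [α/L, ∞)
  have hdecr : ∀ a b : ℝ, α / L ≤ a → a ≤ b → f b ≤ f a := by
    intro a b haL hab
    have ha : 0 < a := lt_of_lt_of_le (by positivity) haL
    have hb : 0 < b := lt_of_lt_of_le ha hab
    rw [hfexp a ha, hfexp b hb]
    apply Real.exp_le_exp.mpr
    have hLa : α ≤ a * L := (div_le_iff₀ hL0).mp haL
    have k1 : Real.log b - Real.log a ≤ b / a - 1 := by
      have := Real.log_le_sub_one_of_pos (div_pos hb ha)
      rwa [Real.log_div hb.ne' ha.ne'] at this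
    have hab' : a * (b / a) = b := by field_simp
    have k1' : a * Real.log b - a * Real.log a ≤ b - a := by
      nlinarith [mul_le_mul_of_nonneg_left k1 ha.le]
    have hD0 : 0 ≤ Real.log b - Real.log a :=
      sub_nonneg.mpr (Real.log_le_log ha hab)
    have c1 : α * (Real.log b - Real.log a) ≤ a * L * (Real.log b - Real.log a) :=
      mul_le_mul_of_nonneg_right hLa hD0
    have c2 : L * (a * (Real.log b - Real.log a)) ≤ L * (b - a) :=
      mul_le_mul_of_nonneg_left (by linarith [k1']) hL0.le
    nlinarith [c1, c2]
  -- the terms of the series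
  have hrL : r = Real.exp (-L) := by
    rw [hLdef, one_div, Real.log_inv, neg_neg, Real.exp_log hr0]
  have hfk : ∀ k : ℕ, (k : ℝ) ^ α * r ^ k = f k := by
    intro k
    rw [hfdef]
    simp only
    congr 1
    rw [hrL, ← Real.exp_nat_mul]
    congr 1
    ring
  -- integrability and value of the integral
  have hInt : IntegrableOn f (Ioi 0) := by
    have := integrableOn_rpow_mul_exp_neg_mul_rpow (p := 1) (s := α) (b := L)
      (by linarith) one_pos hL0
    simpa [Real.rpow_one, neg_mul] using this
  set I : ℝ := ∫ x in Ioi 0, f x with hIdef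
  have hIval : I = Real.Gamma (α + 1) / L ^ (α + 1) := by
    have h := Real.integral_rpow_mul_exp_neg_mul_Ioi (a := α + 1) (r := L)
      (by linarith) hL0
    simp only [add_sub_cancel_right] at h
    rw [hIdef, hfdef]
    simp only
    rw [h, one_div, Real.inv_rpow hL0.le, inv_mul_eq_div]
  -- replace the RHS by 2*M + I
  rw [← hIval]
  set m : ℕ := ⌊α / L⌋₊ with hmdef
  have hmle : (m : ℝ) ≤ α / L := Nat.floor_le (by positivity)
  have hmlt : α / L < (m : ℝ) + 1 := Nat.lt_floor_add_one _
  have hII : ∀ T : ℝ, 0 ≤ T → (∫ x in (0:ℝ)..T, f x) ≤ I := by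
    intro T hT
    rw [intervalIntegral.integral_of_le hT]
    apply setIntegral_mono_set hInt
    · exact (ae_restrict_iff' measurableSet_Ioi).2 (ae_of_all _ fun x hx => hf0 x (le_of_lt hx))
    · exact HasSubset.Subset.eventuallyLE Ioc_subset_Ioi_self
  apply Real.tsum_le_of_sum_range_le (fun k => by positivity)
  intro n
  have hsub : ∑ k ∈ Finset.range n, (k:ℝ)^α * r^k
      ≤ ∑ k ∈ Finset.range (m+2+n), (k:ℝ)^α * r^k := by
    apply Finset.sum_le_sum_of_subset_of_nonneg
    · exact Finset.range_subset_range.mpr (by omega)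
    · intro i _ _; positivity
  refine hsub.trans ?_
  -- piece 1 : the increasing part
  have hp1 : (∑ k ∈ Finset.range m, f k) ≤ ∫ x in (0:ℝ)..(m:ℝ), f x := by
    have heach : ∀ k ∈ Finset.range m, f k ≤ ∫ x in (k:ℝ)..((k:ℝ)+1), f x := by
      intro k hk
      have hk' : (k:ℝ) + 1 ≤ (m:ℝ) := by
        exact_mod_cast Nat.succ_le_of_lt (Finset.mem_range.mp hk)
      have hconst : f k = ∫ _x in (k:ℝ)..((k:ℝ)+1), f (k:ℝ) := by
        rw [intervalIntegral.integral_const]; simp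
      rw [hconst]
      apply intervalIntegral.integral_mono_on (by linarith) intervalIntegrable_const
        (hcont.intervalIntegrable _ _)
      intro x hx
      exact hincr (k:ℝ) x (Nat.cast_nonneg k) hx.1 (le_trans hx.2 (le_trans hk' hmle))
    calc (∑ k ∈ Finset.range m, f k)
        ≤ ∑ k ∈ Finset.range m, ∫ x in (k:ℝ)..((k:ℝ)+1), f x := Finset.sum_le_sum heach
      _ = ∫ x in (0:ℝ)..(m:ℝ), f x := by
          have h := intervalIntegral.sum_integral_adjacent_intervals
            (a := fun i : ℕ => (i:ℝ)) (n := m) (μ := volume)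
            (fun k _ => hcont.intervalIntegrable _ _)
          simp only [Nat.cast_zero, Nat.cast_add, Nat.cast_one] at h
          exact h
  -- piece 3 : the decreasing tail
  have hp3 : (∑ i ∈ Finset.range n, f ((m+2+i : ℕ) : ℝ))
      ≤ ∫ x in ((m:ℝ)+1)..((m:ℝ)+1+(n:ℝ)), f x := by
    have heach : ∀ i ∈ Finset.range n, f ((m+2+i : ℕ) : ℝ)
        ≤ ∫ x in ((m:ℝ)+1+(i:ℝ))..((m:ℝ)+1+((i:ℝ)+1)), f x := by
      intro i _
      have hcast : ((m+2+i : ℕ) : ℝ) = (m:ℝ)+1+((i:ℝ)+1) := by push_cast; ring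
      have hconst : f ((m+2+i : ℕ) : ℝ)
          = ∫ _x in ((m:ℝ)+1+(i:ℝ))..((m:ℝ)+1+((i:ℝ)+1)), f ((m+2+i : ℕ) : ℝ) := by
        rw [intervalIntegral.integral_const,
          show ((m:ℝ)+1+((i:ℝ)+1)) - ((m:ℝ)+1+(i:ℝ)) = 1 by ring, one_smul]
      rw [hconst]
      apply intervalIntegral.integral_mono_on (by linarith) intervalIntegrable_const
        (hcont.intervalIntegrable _ _)
      intro x hx
      rw [hcast]
      have hx1 : α / L ≤ x := by
        have : (0:ℝ) ≤ (i:ℝ) := Nat.cast_nonneg i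
        linarith [hx.1, hmlt.le]
      exact hdecr x ((m:ℝ)+1+((i:ℝ)+1)) hx1 hx.2
    calc (∑ i ∈ Finset.range n, f ((m+2+i : ℕ) : ℝ))
        ≤ ∑ i ∈ Finset.range n, ∫ x in ((m:ℝ)+1+(i:ℝ))..((m:ℝ)+1+((i:ℝ)+1)), f x :=
          Finset.sum_le_sum heach
      _ = ∫ x in ((m:ℝ)+1)..((m:ℝ)+1+(n:ℝ)), f x := by
          have h := intervalIntegral.sum_integral_adjacent_intervals
            (a := fun i : ℕ => (m:ℝ)+1+(i:ℝ)) (n := n) (μ := volume)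
            (fun k _ => hcont.intervalIntegrable _ _)
          simp only [Nat.cast_zero, Nat.cast_add, Nat.cast_one, add_zero] at h
          exact h
  -- combining the two integrals
  have hcomb : (∫ x in (0:ℝ)..(m:ℝ), f x) + (∫ x in ((m:ℝ)+1)..((m:ℝ)+1+(n:ℝ)), f x) ≤ I := by
    have h01 : (∫ x in (0:ℝ)..(m:ℝ), f x) + (∫ x in (m:ℝ)..((m:ℝ)+1), f x)
        = ∫ x in (0:ℝ)..((m:ℝ)+1), f x :=
      intervalIntegral.integral_add_adjacent_intervals (hcont.intervalIntegrable _ _)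
        (hcont.intervalIntegrable _ _)
    have h02 : (∫ x in (0:ℝ)..((m:ℝ)+1), f x)
        + (∫ x in ((m:ℝ)+1)..((m:ℝ)+1+(n:ℝ)), f x)
        = ∫ x in (0:ℝ)..((m:ℝ)+1+(n:ℝ)), f x :=
      intervalIntegral.integral_add_adjacent_intervals (hcont.intervalIntegrable _ _)
        (hcont.intervalIntegrable _ _)
    have hmid : 0 ≤ ∫ x in (m:ℝ)..((m:ℝ)+1), f x :=
      intervalIntegral.integral_nonneg (by linarith)
        (fun x hx => hf0 x (le_trans (Nat.cast_nonneg m) hx.1))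
    have hT := hII ((m:ℝ)+1+(n:ℝ)) (by positivity)
    linarith
  -- put everything together
  have h2 : f ((m : ℕ) : ℝ) ≤ M := hM _ (Nat.cast_nonneg m)
  have h3 : f ((m+1 : ℕ) : ℝ) ≤ M := hM _ (Nat.cast_nonneg _)
  calc ∑ k ∈ Finset.range (m+2+n), (k:ℝ)^α * r^k
      = ∑ k ∈ Finset.range (m+2+n), f k := Finset.sum_congr rfl fun k _ => hfk k
    _ = (∑ k ∈ Finset.range (m+2), f ((k:ℕ):ℝ)) + ∑ i ∈ Finset.range n, f ((m+2+i : ℕ):ℝ) :=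
        Finset.sum_range_add _ _ _
    _ = ((∑ k ∈ Finset.range m, f k) + f ((m:ℕ):ℝ) + f ((m+1 : ℕ):ℝ))
        + ∑ i ∈ Finset.range n, f ((m+2+i : ℕ):ℝ) := by
        rw [show m+2 = (m+1)+1 from rfl, Finset.sum_range_succ, Finset.sum_range_succ]
    _ ≤ 2 * M + I := by linarith [hp1, hp3, hcomb]

end
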